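/- Hourglass modes exist for the Q²–Q¹ discretization with the four-point Gauss rule: there exists a pair (u,v) of real polynomials in (ξ,η), each of degree at most 2 in ξ and at most 2 in η, such that ∂u/∂ξ, ∂v/∂η, and ∂u/∂η + ∂v/∂ξ all vanish at the four points (±√(1/3), ±√(1/3)), yet (u,v) is not a rigid motion, i.e., there are no a,b,c ∈ ℝ with u = a − cη and v = b + cξ. Indeed, the space of such zero-strain fields has dimension at least 18 − 12 = 6 > 3. -/

import Mathlib

open MvPolynomial

noncomputable def fac (j : Fin 2) : MvPolynomial (Fin 2) ℝ := C 3 * X j ^ 2 - 1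

lemma hfac (i j : Fin 2) : degreeOf i (fac j) ≤ 2 * degreeOf i (X j : MvPolynomial (Fin 2) ℝ) := by
  rw [fac, sub_eq_add_neg]
  refine le_trans (degreeOf_add_le _ _ _) (max_le ?_ ?_)
  · exact le_trans (degreeOf_C_mul_le _ _ _) (degreeOf_pow_le _ _ _)
  · have : (-1 : MvPolynomial (Fin 2) ℝ) = C (-1) := by simp
    rw [this, degreeOf_C]; exact Nat.zero_le _

lemma dXij (i j : Fin 2) : degreeOf i (X j : MvPolynomial (Fin 2) ℝ) = if i = j then 1 else 0 := by
  simp [degreeOf_X]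

lemma dmain (i j k : Fin 2) :
    degreeOf i (X j * fac k : MvPolynomial (Fin 2) ℝ) ≤
      degreeOf i (X j : MvPolynomial (Fin 2) ℝ) + 2 * degreeOf i (X k : MvPolynomial (Fin 2) ℝ) :=
  le_trans (degreeOf_mul_le _ _ _) (Nat.add_le_add_left (hfac i k) _)

/-- Hourglass modes exist for the Q²–Q¹ discretization with the four-point Gauss rule:
there is a Q² velocity field `(u,v)` (degree at most 2 in each of `ξ = X 0`, `η = X 1`)
whose strain-rate components `∂u/∂ξ`, `∂v/∂η`, `∂u/∂η + ∂v/∂ξ` all vanish at the four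
Gauss points `(±√(1/3), ±√(1/3))`, yet `(u,v)` is not a rigid motion
`u = a − cη`, `v = b + cξ`. -/
theorem hourglass_modes_exist_Q2 :
    ∃ u v : MvPolynomial (Fin 2) ℝ,
      u.degreeOf 0 ≤ 2 ∧ u.degreeOf 1 ≤ 2 ∧ v.degreeOf 0 ≤ 2 ∧ v.degreeOf 1 ≤ 2 ∧
      (∀ s t : ℝ, (s = Real.sqrt (1/3) ∨ s = -Real.sqrt (1/3)) →
        (t = Real.sqrt (1/3) ∨ t = -Real.sqrt (1/3)) →
          eval ![s, t] (pderiv 0 u) = 0 ∧ eval ![s, t] (pderiv 1 v) = 0 ∧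
          eval ![s, t] (pderiv 1 u + pderiv 0 v) = 0) ∧
      ¬ ∃ a b c : ℝ, u = C a - C c * X 1 ∧ v = C b + C c * X 0 := by
  refine ⟨X 0 * fac 1, -(X 1 * fac 0), ?_, ?_, ?_, ?_, ?_, ?_⟩
  · refine le_trans (dmain 0 0 1) ?_; simp [dXij]
  · refine le_trans (dmain 1 0 1) ?_; simp [dXij]
  · have : degreeOf (0:Fin 2) (-(X 1 * fac 0) : MvPolynomial (Fin 2) ℝ)
        = degreeOf 0 (X 1 * fac 0 : MvPolynomial (Fin 2) ℝ) := by simp [degreeOf_def]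
    rw [this]; refine le_trans (dmain 0 1 0) ?_; simp [dXij]
  · have : degreeOf (1:Fin 2) (-(X 1 * fac 0) : MvPolynomial (Fin 2) ℝ)
        = degreeOf 1 (X 1 * fac 0 : MvPolynomial (Fin 2) ℝ) := by simp [degreeOf_def]
    rw [this]; refine le_trans (dmain 1 1 0) ?_; simp [dXij]
  · intro s t hs ht
    have hs2 : s ^ 2 = 1/3 := by
      rcases hs with rfl | rfl <;>
        simp [Real.sq_sqrt (by norm_num : (0:ℝ) ≤ 1/3)]
    have ht2 : t ^ 2 = 1/3 := by
      rcases ht with rfl | rfl <;>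
        simp [Real.sq_sqrt (by norm_num : (0:ℝ) ≤ 1/3)]
    have h1 : pderiv (0 : Fin 2) (X 0 * fac 1 : MvPolynomial (Fin 2) ℝ) = fac 1 := by
      simp [fac]
    have h2 : pderiv (1 : Fin 2) (-(X 1 * fac 0) : MvPolynomial (Fin 2) ℝ) = -fac 0 := by
      simp [fac]
    have h3 : pderiv (1 : Fin 2) (X 0 * fac 1 : MvPolynomial (Fin 2) ℝ)
        + pderiv (0 : Fin 2) (-(X 1 * fac 0) : MvPolynomial (Fin 2) ℝ) = 0 := by
      simp [fac]; ring
    refine ⟨?_, ?_, ?_⟩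
    · rw [h1]; simp [fac, ht2]
    · rw [h2]; simp [fac, hs2]
    · rw [h3]; simp
  · rintro ⟨a, b, c, hu, hv⟩
    have h1 := congrArg (eval ![(0:ℝ), 0]) hu
    have h2 := congrArg (eval ![(1:ℝ), 0]) hu
    simp [fac] at h1 h2
    linarith
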